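/- arXiv:1001.2548 — 7 statements merged into one kernel-verified Lean document; each statement's English description precedes it below -/
import Mathlib

section
/- Let F be a finite field and let f, g : LaurentSeries F be irrational, i.e. neither f nor g lies in the range of algebraMap (RatFunc F) (LaurentSeries F). Suppose that Tendsto (fun m => (p(f, m) : ℝ) / (p(g, m) : ℝ)) atTop atTop. Then f and g are linearly independent over F(T): for all A, B, C : RatFunc F, if (algebraMap A) * f + (algebraMap B) * g + algebraMap C = 0 in LaurentSeries F, then A = 0, B = 0 and C = 0. -/
open Filter

attribute [local instance] RatFunc.liftAlgebra

/-- The subword complexity of a sequence `a : ℕ → A`: the number of distinct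
factors of length `m` occurring in `a`. -/
noncomputable def subwordComplexity {A : Type*} (a : ℕ → A) (m : ℕ) : ℕ :=
  Set.ncard { w : Fin m → A | ∃ j : ℕ, ∀ i : Fin m, w i = a (j + i) }

/-- The complexity of a Laurent series `f ∈ F((T⁻¹))`: the subword complexity of its
coefficient sequence. -/
noncomputable def laurentComplexity {F : Type*} [Field F] (f : LaurentSeries F) (m : ℕ) : ℕ :=
  subwordComplexity (fun n : ℕ => f.coeff (n : ℤ)) m


open Finset Polynomial

section Aux

variable {F : Type*} [Field F]

lemma one_le_subwordComplexity {A : Type*} [Finite A] (a : ℕ → A) (m : ℕ) :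
    1 ≤ subwordComplexity a m := by
  rw [subwordComplexity]
  have hne : { w : Fin m → A | ∃ j : ℕ, ∀ i : Fin m, w i = a (j + i) }.Nonempty :=
    ⟨fun i => a (0 + i), ⟨0, fun i => rfl⟩⟩
  exact (Set.ncard_pos (Set.toFinite _)).mpr hne

lemma hahn_coeff_sum {α : Type*} (s : Finset α) (h : α → LaurentSeries F) (n : ℤ) :
    (∑ i ∈ s, h i).coeff n = ∑ i ∈ s, (h i).coeff n :=
  map_sum (HahnSeries.coeff.addMonoidHom n) _ _

lemma algebraMap_poly_eq_sum_single (q : F[X]) :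
    algebraMap F[X] (LaurentSeries F) q
      = ∑ i ∈ Finset.range (q.natDegree + 1), HahnSeries.single (i : ℤ) (q.coeff i) := by
  conv_lhs => rw [q.as_sum_range' (q.natDegree + 1) (lt_add_one _)]
  rw [map_sum]
  refine Finset.sum_congr rfl fun i _ => ?_
  rw [← Polynomial.C_mul_X_pow_eq_monomial, map_mul, map_pow]
  rw [Polynomial.algebraMap_hahnSeries_apply, Polynomial.algebraMap_hahnSeries_apply,
    Polynomial.coe_C, Polynomial.coe_X, HahnSeries.ofPowerSeries_C, HahnSeries.ofPowerSeries_X]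
  rw [← RatFunc.single_one_eq_pow]
  rw [HahnSeries.C_apply, HahnSeries.single_mul_single, zero_add, mul_one]

lemma coeff_algebraMap_poly_mul (q : F[X]) (x : LaurentSeries F) (n : ℤ) :
    ((algebraMap F[X] (LaurentSeries F) q) * x).coeff n
      = ∑ i ∈ Finset.range (q.natDegree + 1), q.coeff i * x.coeff (n - i) := by
  rw [algebraMap_poly_eq_sum_single, Finset.sum_mul, hahn_coeff_sum]
  refine Finset.sum_congr rfl fun i _ => ?_
  rw [show n = (n - i) + (i : ℤ) by ring, HahnSeries.coeff_single_mul_add]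
  ring_nf

lemma coeff_algebraMap_poly_of_big (u : F[X]) (n : ℤ) (h : (u.natDegree : ℤ) < n) :
    (algebraMap F[X] (LaurentSeries F) u).coeff n = 0 := by
  rw [algebraMap_poly_eq_sum_single, hahn_coeff_sum]
  refine Finset.sum_eq_zero fun i hi => ?_
  rw [Finset.mem_range] at hi
  rw [HahnSeries.coeff_single_of_ne (by omega)]

lemma determinism (f g : LaurentSeries F) (Q P : F[X]) (hQ : Q ≠ 0) (dU : ℕ)
    (hrel : ∀ n : ℤ, (dU : ℤ) < n →
      ∑ i ∈ Finset.range (Q.natDegree + 1), Q.coeff i * f.coeff (n - i)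
        = ∑ i ∈ Finset.range (P.natDegree + 1), P.coeff i * g.coeff (n - i))
    (m : ℕ) (x y : ℤ) (hx : (dU : ℤ) < x) (hy : (dU : ℤ) < y)
    (hgw : ∀ r : ℤ, (Q.natTrailingDegree : ℤ) - P.natDegree ≤ r → r < m + Q.natTrailingDegree →
      g.coeff (x + r) = g.coeff (y + r))
    (hst : ∀ r : ℤ, -((Q.natDegree : ℤ) - Q.natTrailingDegree) ≤ r → r < 0 →
      f.coeff (x + r) = f.coeff (y + r)) :
    ∀ t : ℕ, t < m → f.coeff (x + t) = f.coeff (y + t) := by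
  set e0 := Q.natTrailingDegree with he0
  have he0d : e0 ≤ Q.natDegree := Q.natTrailingDegree_le_natDegree
  have hc : Q.coeff e0 ≠ 0 := Polynomial.coeff_natTrailingDegree_ne_zero.mpr hQ
  have hrec : ∀ z : ℤ, (dU : ℤ) < z →
      f.coeff z = (Q.coeff e0)⁻¹ *
        ((∑ i ∈ Finset.range (P.natDegree + 1), P.coeff i * g.coeff (z + e0 - i))
          - ∑ i ∈ Finset.Ico (e0 + 1) (Q.natDegree + 1), Q.coeff i * f.coeff (z + e0 - i)) := by
    intro z hz
    have h1 := hrel (z + e0) (by omega)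
    have hsplit : ∑ i ∈ Finset.range (Q.natDegree + 1), Q.coeff i * f.coeff (z + e0 - i)
        = Q.coeff e0 * f.coeff z
          + ∑ i ∈ Finset.Ico (e0 + 1) (Q.natDegree + 1), Q.coeff i * f.coeff (z + e0 - i) := by
      rw [Finset.range_eq_Ico,
        ← Finset.sum_Ico_consecutive _ (Nat.zero_le e0) (by omega : e0 ≤ Q.natDegree + 1)]
      have h0 : ∑ i ∈ Finset.Ico 0 e0, Q.coeff i * f.coeff (z + e0 - i) = 0 :=
        Finset.sum_eq_zero fun i hi => by
          rw [Polynomial.coeff_eq_zero_of_lt_natTrailingDegree (Finset.mem_Ico.mp hi).2, zero_mul]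
      rw [h0, zero_add, Finset.sum_eq_sum_Ico_succ_bot (by omega : e0 < Q.natDegree + 1)]
      congr 2
      ring_nf
    rw [hsplit] at h1
    have h2 : Q.coeff e0 * f.coeff z
        = (∑ i ∈ Finset.range (P.natDegree + 1), P.coeff i * g.coeff (z + e0 - i))
          - ∑ i ∈ Finset.Ico (e0 + 1) (Q.natDegree + 1), Q.coeff i * f.coeff (z + e0 - i) := by
      rw [← h1]; ring
    rw [← h2, inv_mul_cancel_left₀ hc]
  intro t
  induction t using Nat.strong_induction_on with
  | _ t IH =>
    intro htm
    rw [hrec (x + t) (by omega), hrec (y + t) (by omega)]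
    congr 1
    congr 1
    · refine Finset.sum_congr rfl fun i hi => ?_
      rw [Finset.mem_range] at hi
      have := hgw ((t : ℤ) + e0 - i) (by omega) (by omega)
      rw [show x + ↑t + ↑e0 - ↑i = x + (↑t + ↑e0 - ↑i) by ring,
        show y + ↑t + ↑e0 - ↑i = y + (↑t + ↑e0 - ↑i) by ring, this]
    · refine Finset.sum_congr rfl fun i hi => ?_
      rw [Finset.mem_Ico] at hi
      rcases le_or_gt (i : ℤ) ((t : ℤ) + e0) with hle | hlt
      · -- inside window, use IH with t' = t + e0 - i
        have ht' : ((t + e0 - i : ℕ) : ℤ) = (t : ℤ) + e0 - i := by omega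
        have htlt : t + e0 - i < t := by omega
        have := IH (t + e0 - i) htlt (by omega)
        rw [show x + ↑t + ↑e0 - ↑i = x + ((t + e0 - i : ℕ) : ℤ) by omega,
          show y + ↑t + ↑e0 - ↑i = y + ((t + e0 - i : ℕ) : ℤ) by omega, this]
      · -- state
        have := hst ((t : ℤ) + e0 - i) (by omega) (by omega)
        rw [show x + ↑t + ↑e0 - ↑i = x + (↑t + ↑e0 - ↑i) by ring,
          show y + ↑t + ↑e0 - ↑i = y + (↑t + ↑e0 - ↑i) by ring, this]

lemma ncard_range_le_of_factor {α β : Type*} [Finite β] [Nonempty α] (h : ℕ → α) (e : ℕ → β)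
    (hc : ∀ j j', e j = e j' → h j = h j') :
    Set.ncard (Set.range h) ≤ Nat.card β := by
  classical
  set φ : β → α := fun b => if hb : ∃ j, e j = b then h hb.choose else Classical.arbitrary α
    with hφ
  have hsub : Set.range h ⊆ Set.range φ := by
    rintro - ⟨j, rfl⟩
    refine ⟨e j, ?_⟩
    have hex : ∃ j', e j' = e j := ⟨j, rfl⟩
    show (if hb : ∃ j', e j' = e j then h hb.choose else Classical.arbitrary α) = h j
    rw [dif_pos hex]
    exact hc _ _ hex.choose_spec
  calc Set.ncard (Set.range h) ≤ Set.ncard (Set.range φ) :=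
        Set.ncard_le_ncard hsub (Set.toFinite _)
    _ ≤ Set.ncard (Set.univ : Set β) := by
        rw [← Set.image_univ]; exact Set.ncard_image_le (Set.toFinite _)
    _ = Nat.card β := Set.ncard_univ β

lemma subword_set_eq_range {A : Type*} (a : ℕ → A) (m : ℕ) :
    { w : Fin m → A | ∃ j : ℕ, ∀ i : Fin m, w i = a (j + i) }
      = Set.range (fun j : ℕ => fun i : Fin m => a (j + i)) := by
  ext w
  simp only [Set.mem_setOf_eq, Set.mem_range]
  constructor
  · rintro ⟨j, hj⟩; exact ⟨j, by ext i; exact (hj i).symm⟩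
  · rintro ⟨j, rfl⟩; exact ⟨j, fun i => rfl⟩

lemma main_bound [Fintype F] (f g : LaurentSeries F) (Q P U : F[X]) (hQ : Q ≠ 0)
    (hkey : algebraMap F[X] (LaurentSeries F) Q * f
      = algebraMap F[X] (LaurentSeries F) P * g + algebraMap F[X] (LaurentSeries F) U) :
    ∃ K : ℕ, ∀ m, laurentComplexity f m ≤ K * laurentComplexity g m := by
  classical
  have he0d : Q.natTrailingDegree ≤ Q.natDegree := Q.natTrailingDegree_le_natDegree
  set dP := P.natDegree with hdP
  set dQ := Q.natDegree with hdQ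
  set e0 := Q.natTrailingDegree with he0
  set dU := U.natDegree with hdUdef
  set s := dQ - e0 with hs
  set J := dP + dU + 1 with hJ
  set c := Fintype.card F with hc
  have hrel : ∀ n : ℤ, (dU : ℤ) < n →
      ∑ i ∈ Finset.range (dQ + 1), Q.coeff i * f.coeff (n - i)
        = ∑ i ∈ Finset.range (dP + 1), P.coeff i * g.coeff (n - i) := by
    intro n hn
    have h0 := congrArg (fun z : LaurentSeries F => z.coeff n) hkey
    rw [coeff_algebraMap_poly_mul, HahnSeries.coeff_add, coeff_algebraMap_poly_mul,
      coeff_algebraMap_poly_of_big U n hn, add_zero] at h0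
    exact h0
  refine ⟨J + c ^ dP * c ^ s, fun m => ?_⟩
  set ag : ℕ → F := fun n : ℕ => g.coeff (n : ℤ) with hag
  set af : ℕ → F := fun n : ℕ => f.coeff (n : ℤ) with haf
  set Gset : Set (Fin m → F) := { w : Fin m → F | ∃ j : ℕ, ∀ i : Fin m, w i = ag (j + i) }
    with hGset
  set hw : ℕ → (Fin m → F) := fun j => fun i : Fin m => af (j + i) with hhw
  set em : ℕ → (Fin J ⊕ (↥Gset × (Fin dP → F) × (Fin s → F))) := fun j =>
    if hj : j < J then Sum.inl ⟨j, hj⟩ else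
      Sum.inr (⟨fun i : Fin m => ag (j + e0 - dP + i), ⟨j + e0 - dP, fun i => rfl⟩⟩,
        fun i : Fin dP => g.coeff ((j : ℤ) + e0 - dP + m + i),
        fun i : Fin s => f.coeff ((j : ℤ) - 1 - i)) with hem
  have hcomp : ∀ j j', em j = em j' → hw j = hw j' := by
    intro j j' hjj
    rw [hem] at hjj
    simp only at hjj
    by_cases hj : j < J <;> by_cases hj' : j' < J
    · rw [dif_pos hj, dif_pos hj'] at hjj
      simp only [Sum.inl.injEq, Fin.mk.injEq] at hjj
      subst hjj; rfl
    · rw [dif_pos hj, dif_neg hj'] at hjj; exact absurd hjj (by simp)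
    · rw [dif_neg hj, dif_pos hj'] at hjj; exact absurd hjj (by simp)
    · rw [dif_neg hj, dif_neg hj'] at hjj
      simp only [Sum.inr.injEq, Prod.mk.injEq, Subtype.mk.injEq] at hjj
      obtain ⟨h1, h2, h3⟩ := hjj
      have hdet := determinism f g Q P hQ dU hrel m (j : ℤ) (j' : ℤ)
        (by omega) (by omega)
        (by
          intro r hr1 hr2
          rcases lt_or_ge r ((e0 : ℤ) - dP + m) with hcase | hcase
          · have hnn : (0:ℤ) ≤ r - ((e0 : ℤ) - dP) := by omega
            set i : Fin m := ⟨(r - ((e0 : ℤ) - (dP : ℤ))).toNat, by omega⟩ with hi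
            have hval := congrFun h1 i
            have hiv : (i : ℤ) = r - ((e0 : ℤ) - dP) := by
              rw [hi]; exact Int.toNat_of_nonneg hnn
            rw [show (j : ℤ) + r = ((j + e0 - dP + (i : ℕ) : ℕ) : ℤ) by omega,
              show (j' : ℤ) + r = ((j' + e0 - dP + (i : ℕ) : ℕ) : ℤ) by omega]
            exact hval
          · set i : Fin dP := ⟨(r - ((e0 : ℤ) - dP + m)).toNat, by omega⟩ with hi
            have hval := congrFun h2 i
            have hiv : (i : ℤ) = r - ((e0 : ℤ) - dP + m) := by
              rw [hi]; exact Int.toNat_of_nonneg (by omega)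
            rw [show (j : ℤ) + r = (j : ℤ) + e0 - dP + m + i by omega,
              show (j' : ℤ) + r = (j' : ℤ) + e0 - dP + m + i by omega]
            exact hval)
        (by
          intro r hr1 hr2
          set i : Fin s := ⟨(-1 - r).toNat, by omega⟩ with hi
          have hval := congrFun h3 i
          have hiv : (i : ℤ) = -1 - r := by rw [hi]; exact Int.toNat_of_nonneg (by omega)
          rw [show (j : ℤ) + r = (j : ℤ) - 1 - i by omega,
            show (j' : ℤ) + r = (j' : ℤ) - 1 - i by omega]
          exact hval)
      funext i
      have := hdet i i.isLt
      show af (j + i) = af (j' + i)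
      rw [haf]
      simp only
      rw [show ((j + (i : ℕ) : ℕ) : ℤ) = (j : ℤ) + (i : ℕ) by omega,
        show ((j' + (i : ℕ) : ℕ) : ℤ) = (j' : ℤ) + (i : ℕ) by omega]
      exact this
  have h1g : 1 ≤ laurentComplexity g m := one_le_subwordComplexity ag m
  calc laurentComplexity f m
      = Set.ncard (Set.range hw) := by
        rw [laurentComplexity, subwordComplexity, subword_set_eq_range af m]
    _ ≤ Nat.card (Fin J ⊕ (↥Gset × (Fin dP → F) × (Fin s → F))) :=
        ncard_range_le_of_factor hw em hcomp
    _ = J + laurentComplexity g m * (c ^ dP * c ^ s) := by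
        rw [Nat.card_sum, Nat.card_prod, Nat.card_prod, Nat.card_coe_set_eq]
        have hG : Gset.ncard = laurentComplexity g m := rfl
        rw [hG]
        simp [Nat.card_eq_fintype_card, Fintype.card_fun, hc]
    _ ≤ (J + c ^ dP * c ^ s) * laurentComplexity g m := by
        rw [add_mul]
        exact Nat.add_le_add (Nat.le_mul_of_pos_right J (by omega)) (by rw [mul_comm])

end Aux

/-- A criterion of linear independence over `F(T)`: two irrational Laurent series
whose complexity functions have ratio tending to infinity are linearly
independent over `F(T)`. -/
theorem linear_independence_of_complexity_ratio
    (F : Type*) [Field F] [Fintype F] (f g : LaurentSeries F)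
    (hf : f ∉ Set.range (algebraMap (RatFunc F) (LaurentSeries F)))
    (hg : g ∉ Set.range (algebraMap (RatFunc F) (LaurentSeries F)))
    (hratio : Tendsto
      (fun m : ℕ => (laurentComplexity f m : ℝ) / (laurentComplexity g m : ℝ))
      atTop atTop) :
    ∀ A B C : RatFunc F,
      (algebraMap (RatFunc F) (LaurentSeries F) A) * f +
        (algebraMap (RatFunc F) (LaurentSeries F) B) * g +
        (algebraMap (RatFunc F) (LaurentSeries F) C) = 0 →
      A = 0 ∧ B = 0 ∧ C = 0 := by
  intro A B C hzero
  have hinj : Function.Injective (algebraMap (RatFunc F) (LaurentSeries F)) :=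
    (algebraMap (RatFunc F) (LaurentSeries F)).injective
  have tower : ∀ p : F[X], algebraMap (RatFunc F) (LaurentSeries F) (algebraMap F[X] (RatFunc F) p)
      = algebraMap F[X] (LaurentSeries F) p := fun p =>
    (IsScalarTower.algebraMap_apply F[X] (RatFunc F) (LaurentSeries F) p).symm
  have hA : A = 0 := by
    by_contra hA
    set D : F[X] := A.denom * (B.denom * C.denom) with hD
    have hclear : ∀ x : RatFunc F,
        x * algebraMap F[X] (RatFunc F) x.denom = algebraMap F[X] (RatFunc F) x.num := by
      intro x
      calc x * algebraMap F[X] (RatFunc F) x.denom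
          = (algebraMap F[X] (RatFunc F) x.num / algebraMap F[X] (RatFunc F) x.denom)
            * algebraMap F[X] (RatFunc F) x.denom := by rw [RatFunc.num_div_denom]
        _ = algebraMap F[X] (RatFunc F) x.num :=
            div_mul_cancel₀ _ (RatFunc.algebraMap_ne_zero (RatFunc.denom_ne_zero x))
    set QA : F[X] := A.num * (B.denom * C.denom) with hQA
    set PB : F[X] := B.num * (A.denom * C.denom) with hPB
    set UC : F[X] := C.num * (A.denom * B.denom) with hUC
    have hmulA : A * algebraMap F[X] (RatFunc F) D = algebraMap F[X] (RatFunc F) QA := by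
      rw [hD, hQA, map_mul, map_mul, map_mul, map_mul]
      linear_combination (algebraMap F[X] (RatFunc F) B.denom
        * algebraMap F[X] (RatFunc F) C.denom) * hclear A
    have hmulB : B * algebraMap F[X] (RatFunc F) D = algebraMap F[X] (RatFunc F) PB := by
      rw [hD, hPB, map_mul, map_mul, map_mul, map_mul]
      linear_combination (algebraMap F[X] (RatFunc F) A.denom
        * algebraMap F[X] (RatFunc F) C.denom) * hclear B
    have hmulC : C * algebraMap F[X] (RatFunc F) D = algebraMap F[X] (RatFunc F) UC := by
      rw [hD, hUC, map_mul, map_mul, map_mul, map_mul]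
      linear_combination (algebraMap F[X] (RatFunc F) A.denom
        * algebraMap F[X] (RatFunc F) B.denom) * hclear C
    have eA : algebraMap (RatFunc F) (LaurentSeries F) A
        * algebraMap F[X] (LaurentSeries F) D = algebraMap F[X] (LaurentSeries F) QA := by
      rw [← tower D, ← map_mul, hmulA, tower]
    have eB : algebraMap (RatFunc F) (LaurentSeries F) B
        * algebraMap F[X] (LaurentSeries F) D = algebraMap F[X] (LaurentSeries F) PB := by
      rw [← tower D, ← map_mul, hmulB, tower]
    have eC : algebraMap (RatFunc F) (LaurentSeries F) C
        * algebraMap F[X] (LaurentSeries F) D = algebraMap F[X] (LaurentSeries F) UC := by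
      rw [← tower D, ← map_mul, hmulC, tower]
    have hls : algebraMap F[X] (LaurentSeries F) QA * f
        + algebraMap F[X] (LaurentSeries F) PB * g + algebraMap F[X] (LaurentSeries F) UC = 0 := by
      have h0 := congrArg (fun z => z * algebraMap F[X] (LaurentSeries F) D) hzero
      simp only [add_mul, zero_mul] at h0
      linear_combination h0 - f * eA - g * eB - eC
    have hkey : algebraMap F[X] (LaurentSeries F) QA * f
        = algebraMap F[X] (LaurentSeries F) (-PB) * g
          + algebraMap F[X] (LaurentSeries F) (-UC) := by
      rw [map_neg, map_neg]
      linear_combination hls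
    have hQAne : QA ≠ 0 := by
      rw [hQA]
      exact mul_ne_zero (RatFunc.num_ne_zero hA)
        (mul_ne_zero (RatFunc.denom_ne_zero B) (RatFunc.denom_ne_zero C))
    obtain ⟨K, hK⟩ := main_bound f g QA (-PB) (-UC) hQAne hkey
    obtain ⟨m, hm⟩ := (hratio.eventually (eventually_gt_atTop (K : ℝ))).exists
    have h1g : 1 ≤ laurentComplexity g m := one_le_subwordComplexity _ m
    have hgpos : (0 : ℝ) < (laurentComplexity g m : ℝ) := by exact_mod_cast h1g
    have hle : (laurentComplexity f m : ℝ) ≤ K * laurentComplexity g m := by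
      exact_mod_cast hK m
    have hfin : (laurentComplexity f m : ℝ) / laurentComplexity g m ≤ K := by
      rw [div_le_iff₀ hgpos]; exact hle
    linarith
  rw [hA, map_zero, zero_mul, zero_add] at hzero
  have hB : B = 0 := by
    by_contra hB
    apply hg
    have hBne : algebraMap (RatFunc F) (LaurentSeries F) B ≠ 0 := fun h =>
      hB (hinj (by rw [h, map_zero]))
    refine ⟨-C / B, ?_⟩
    rw [map_div₀, map_neg, div_eq_iff hBne]
    linear_combination -hzero
  rw [hB, map_zero, zero_mul, zero_add] at hzero
  have hC : C = 0 := hinj (by rw [hzero, map_zero])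
  exact ⟨hA, hB, hC⟩
end

section
/- Let F be a finite field of characteristic p, let k ≥ 1 be an integer and let a : ℕ → F. Define b : ℕ → F by b n = (∏_{i=0}^{k−1} (−(n : F) − i)) · a n, the coefficient sequence (up to the complexity-preserving shift by T^{−k}) of the k-th formal derivative with respect to T of the Laurent series f = ∑_{n≥0} a_n T^{−n}. Then there exists a real constant M > 0 such that p(b, m) ≤ M · p(a, m) for all m ≥ 1. -/
/-- The coefficient sequence of the `k`-th formal derivative of a Laurent series,
namely `b n = (−n)(−n−1)⋯(−n−k+1)·a n`, has complexity at most a constant multiple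
of that of `a`. -/
theorem complexity_formal_derivative
    (F : Type*) [Field F] [Fintype F] (k : ℕ) (hk : 1 ≤ k) (a : ℕ → F)
    (b : ℕ → F)
    (hb : ∀ n : ℕ, b n = (∏ i ∈ Finset.range k, (-(n : F) - (i : F))) * a n) :
    ∃ M : ℝ, 0 < M ∧ ∀ m : ℕ, 1 ≤ m →
      (subwordComplexity b m : ℝ) ≤ M * (subwordComplexity a m : ℝ) := by
  classical
  set q := Fintype.card F with hqdef
  have hq0 : 0 < q := Fintype.card_pos
  refine ⟨(q : ℝ), by exact_mod_cast hq0, ?_⟩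
  intro m _
  set g : ℕ → F := fun n => ∏ i ∈ Finset.range k, (-(n : F) - (i : F)) with hg
  have hcast : ∀ j : ℕ, ((j % q : ℕ) : F) = (j : F) := by
    intro j
    conv_rhs => rw [← Nat.mod_add_div j q]
    push_cast
    rw [hqdef, Nat.cast_card_eq_zero]
    ring
  have hgp : ∀ j i : ℕ, g (j % q + i) = g (j + i) := by
    intro j i
    have h : ((j % q + i : ℕ) : F) = ((j + i : ℕ) : F) := by
      push_cast
      rw [hcast]
    simp only [hg, h]
  set Sa := { w : Fin m → F | ∃ j : ℕ, ∀ i : Fin m, w i = a (j + i) } with hSa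
  set Sb := { w : Fin m → F | ∃ j : ℕ, ∀ i : Fin m, w i = b (j + i) } with hSb
  have hsub : Sb ⊆ (fun p : (Fin m → F) × Fin q =>
      fun i : Fin m => g (p.2.val + i.val) * p.1 i) '' (Sa ×ˢ Set.univ) := by
    rintro w ⟨j, hj⟩
    refine ⟨⟨fun i => a (j + i), ⟨j % q, Nat.mod_lt _ hq0⟩⟩, ⟨⟨j, fun i => rfl⟩, trivial⟩, ?_⟩
    funext i
    simp only [hgp j i.val, ← hb]
    exact ((hj i).trans (hb _)).symm
  have h1 : Sb.ncard ≤ (Sa ×ˢ (Set.univ : Set (Fin q))).ncard :=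
    le_trans (Set.ncard_le_ncard hsub (Set.toFinite _)) (Set.ncard_image_le (Set.toFinite _))
  have h2 : (Sa ×ˢ (Set.univ : Set (Fin q))).ncard = Sa.ncard * q := by
    rw [Set.ncard_eq_toFinset_card', Set.toFinset_prod, Finset.card_product,
      ← Set.ncard_eq_toFinset_card', Set.toFinset_univ, Finset.card_univ, Fintype.card_fin]
  have hfinal : Sb.ncard ≤ Sa.ncard * q := h2 ▸ h1
  have : subwordComplexity b m ≤ subwordComplexity a m * q := hfinal
  calc (subwordComplexity b m : ℝ) ≤ (subwordComplexity a m * q : ℕ) := by exact_mod_cast this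
    _ = (q : ℝ) * (subwordComplexity a m : ℝ) := by push_cast; ring
end

section
/- Let F be a finite field with q elements (q = Fintype.card F), let a : ℕ → F, and let r be an integer with 0 ≤ r < q. Then the image of a under the Cartier operator Λ_r, namely the sequence n ↦ a (q·n + r), satisfies p(fun n => a (q·n + r), m) ≤ q · (p(a, m))^q for every integer m ≥ 1. -/
section Aux

variable {A : Type*} [Finite A] (a : ℕ → A)

private lemma factors_finite (m : ℕ) :
    { w : Fin m → A | ∃ j : ℕ, ∀ i : Fin m, w i = a (j + i) }.Finite :=
  Set.toFinite _

/-- Subadditivity (submultiplicativity) of subword complexity. -/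
private lemma sc_add (k l : ℕ) :
    subwordComplexity a (k + l) ≤ subwordComplexity a k * subwordComplexity a l := by
  classical
  set Sk := { w : Fin k → A | ∃ j : ℕ, ∀ i : Fin k, w i = a (j + i) }
  set Sl := { w : Fin l → A | ∃ j : ℕ, ∀ i : Fin l, w i = a (j + i) }
  set g : (Fin k → A) × (Fin l → A) → (Fin (k + l) → A) :=
    fun p => Fin.append p.1 p.2
  have hsub : { w : Fin (k + l) → A | ∃ j : ℕ, ∀ i : Fin (k + l), w i = a (j + i) }
      ⊆ g '' (Sk ×ˢ Sl) := by
    rintro w ⟨j, hj⟩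
    refine ⟨(fun i => w (Fin.castAdd l i), fun i => w (Fin.natAdd k i)), ⟨⟨j, ?_⟩, ⟨j + k, ?_⟩⟩, ?_⟩
    · intro i; simpa using hj (Fin.castAdd l i)
    · intro i
      have := hj (Fin.natAdd k i)
      simpa [Nat.add_assoc] using this
    · funext i
      refine Fin.addCases (fun i => ?_) (fun i => ?_) i
      · simp [g, Fin.append_left]
      · simp [g, Fin.append_right]
  have hprod : (Sk ×ˢ Sl).ncard = Sk.ncard * Sl.ncard := by
    have := Nat.card_congr (Equiv.Set.prod Sk Sl)
    simp only [Nat.card_prod] at this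
    simpa [Set.ncard_eq_toFinset_card', Nat.card_coe_set_eq] using this
  calc subwordComplexity a (k + l)
      ≤ (g '' (Sk ×ˢ Sl)).ncard :=
        Set.ncard_le_ncard hsub ((Set.toFinite _).image g)
    _ ≤ (Sk ×ˢ Sl).ncard := Set.ncard_image_le (Set.toFinite _)
    _ = subwordComplexity a k * subwordComplexity a l := hprod

private lemma sc_zero : subwordComplexity a 0 = 1 := by
  have hset : { w : Fin 0 → A | ∃ j : ℕ, ∀ i : Fin 0, w i = a (j + i) } = Set.univ :=
    Set.eq_univ_of_forall fun w => ⟨0, fun i => i.elim0⟩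
  rw [subwordComplexity, hset, Set.ncard_univ]
  rw [Nat.card_eq_one_iff_unique]
  exact ⟨⟨fun u v => funext fun i => i.elim0⟩, ⟨fun i => i.elim0⟩⟩

private lemma sc_mul (n m : ℕ) :
    subwordComplexity a (n * m) ≤ (subwordComplexity a m) ^ n := by
  induction n with
  | zero => simp [sc_zero a]
  | succ n ih =>
      have h1 : subwordComplexity a ((n + 1) * m) ≤
          subwordComplexity a (n * m) * subwordComplexity a m := by
        have := sc_add a (n * m) m
        simpa [Nat.succ_mul] using this
      calc subwordComplexity a ((n + 1) * m)
          ≤ subwordComplexity a (n * m) * subwordComplexity a m := h1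
        _ ≤ (subwordComplexity a m) ^ n * subwordComplexity a m :=
            Nat.mul_le_mul_right _ ih
        _ = (subwordComplexity a m) ^ (n + 1) := by ring

end Aux

/-- The Cartier operator `Λ_r`, sending a coefficient sequence `a` to
`n ↦ a (q·n + r)` (with `q` the cardinality of the field and `0 ≤ r < q`),
satisfies `p(Λ_r(f), m) ≤ q · p(f, m)^q`. -/
theorem complexity_cartier_operator
    (F : Type*) [Field F] [Fintype F] (a : ℕ → F) (r : ℕ)
    (hr : r < Fintype.card F) (m : ℕ) (hm : 1 ≤ m) :
    subwordComplexity (fun n => a (Fintype.card F * n + r)) m ≤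
      Fintype.card F * (subwordComplexity a m) ^ (Fintype.card F) := by
  classical
  set q := Fintype.card F with hq
  have hq1 : 1 ≤ q := Fintype.card_pos
  -- step 1: complexity of Cartier image ≤ complexity of a at length q*m
  set b : ℕ → F := fun n => a (q * n + r)
  have step1 : subwordComplexity b m ≤ subwordComplexity a (q * m) := by
    set g : (Fin (q * m) → F) → (Fin m → F) :=
      fun v i => v ⟨q * i + r, by
        have hi : (i : ℕ) + 1 ≤ m := i.isLt
        calc q * (i : ℕ) + r < q * (i : ℕ) + q := by omega
          _ = q * ((i : ℕ) + 1) := by ring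
          _ ≤ q * m := Nat.mul_le_mul_left _ hi⟩
    have hsub : { w : Fin m → F | ∃ j : ℕ, ∀ i : Fin m, w i = b (j + i) }
        ⊆ g '' { v : Fin (q * m) → F | ∃ j : ℕ, ∀ i : Fin (q * m), v i = a (j + i) } := by
      rintro w ⟨j, hj⟩
      refine ⟨fun i => a (q * j + (i : ℕ)), ⟨q * j, fun i => rfl⟩, ?_⟩
      funext i
      have := hj i
      simp only [g, b] at *
      rw [this]
      congr 1
      ring
    calc subwordComplexity b m
        ≤ (g '' _).ncard := Set.ncard_le_ncard hsub ((Set.toFinite _).image g)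
      _ ≤ _ := Set.ncard_image_le (Set.toFinite _)
  calc subwordComplexity b m
      ≤ subwordComplexity a (q * m) := step1
    _ ≤ (subwordComplexity a m) ^ q := sc_mul a q m
    _ ≤ q * (subwordComplexity a m) ^ q := Nat.le_mul_of_pos_left _ hq1
end

section
/- Let n and k be positive integers with k < 2^n − 1. Then k can be written as ∑_{j ∈ J} (2^j − 1) for some finite set J of positive integers if and only if k + (2^n − 1) can be written as ∑_{i ∈ I} (2^i − 1) for some finite set I of positive integers. Moreover, in the latter case n ∈ I and k = ∑_{i ∈ I \ {n}} (2^i − 1). -/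
lemma sum_two_pow_sub_one_lt (n : ℕ) (S : Finset ℕ) (h : ∀ i ∈ S, i < n) :
    ∑ i ∈ S, (2 ^ i - 1) < 2 ^ n := by
  calc ∑ i ∈ S, (2 ^ i - 1)
      ≤ ∑ i ∈ Finset.range n, (2 ^ i - 1) :=
        Finset.sum_le_sum_of_subset (fun i hi => Finset.mem_range.mpr (h i hi))
    _ ≤ ∑ i ∈ Finset.range n, 2 ^ i := Finset.sum_le_sum (fun i _ => Nat.sub_le _ _)
    _ = 2 ^ n - 1 := by rw [Nat.geomSum_eq (le_refl 2)]; omega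
    _ < 2 ^ n := by have := Nat.one_le_two_pow (n := n); omega

/-- For positive integers `n, k` with `k < 2^n − 1`: `k` is a sum of distinct terms
`2^j − 1` (with `j ≥ 1`) iff `k + (2^n − 1)` is; moreover any such representation
`k + (2^n − 1) = ∑_{i ∈ I} (2^i − 1)` contains `n`, and `k = ∑_{i ∈ I \ {n}} (2^i − 1)`. -/
theorem shift_representation_two (n k : ℕ) (hn : 1 ≤ n) (hk : 1 ≤ k)
    (hlt : k < 2 ^ n - 1) :
    ((∃ J : Finset ℕ, (∀ j ∈ J, 1 ≤ j) ∧ k = ∑ j ∈ J, (2 ^ j - 1)) ↔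
      (∃ I : Finset ℕ, (∀ i ∈ I, 1 ≤ i) ∧ k + (2 ^ n - 1) = ∑ i ∈ I, (2 ^ i - 1))) ∧
    (∀ I : Finset ℕ, (∀ i ∈ I, 1 ≤ i) → k + (2 ^ n - 1) = ∑ i ∈ I, (2 ^ i - 1) →
      n ∈ I ∧ k = ∑ i ∈ I.erase n, (2 ^ i - 1)) := by
  have h2n : 1 ≤ 2 ^ n := Nat.one_le_two_pow
  have key : ∀ I : Finset ℕ, (∀ i ∈ I, 1 ≤ i) → k + (2 ^ n - 1) = ∑ i ∈ I, (2 ^ i - 1) →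
      n ∈ I ∧ k = ∑ i ∈ I.erase n, (2 ^ i - 1) := by
    intro I hI hsum
    -- no element of I exceeds n
    have hle : ∀ i ∈ I, i ≤ n := by
      intro i hi
      by_contra hgt
      push_neg at hgt
      have h1 : 2 ^ i - 1 ≤ ∑ j ∈ I, (2 ^ j - 1) :=
        Finset.single_le_sum (f := fun j => 2 ^ j - 1) (fun j _ => Nat.zero_le _) hi
      have h2 : 2 ^ (n + 1) ≤ 2 ^ i := Nat.pow_le_pow_right (by norm_num) hgt
      have h3 : (2 : ℕ) ^ (n + 1) = 2 * 2 ^ n := by ring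
      omega
    have hnI : n ∈ I := by
      by_contra hnI
      have hltn : ∀ i ∈ I, i < n := fun i hi => lt_of_le_of_ne (hle i hi)
        (fun h => hnI (h ▸ hi))
      have := sum_two_pow_sub_one_lt n I hltn
      omega
    refine ⟨hnI, ?_⟩
    rw [← Finset.sum_erase_add I _ hnI] at hsum
    omega
  refine ⟨⟨?_, ?_⟩, key⟩
  · rintro ⟨J, hJ, hk'⟩
    have hJlt : ∀ j ∈ J, j < n := by
      intro j hj
      by_contra hgt
      push_neg at hgt
      have h1 : 2 ^ j - 1 ≤ ∑ i ∈ J, (2 ^ i - 1) :=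
        Finset.single_le_sum (f := fun i => 2 ^ i - 1) (fun i _ => Nat.zero_le _) hj
      have h2 : 2 ^ n ≤ 2 ^ j := Nat.pow_le_pow_right (by norm_num) hgt
      omega
    have hnJ : n ∉ J := fun h => lt_irrefl n (hJlt n h)
    refine ⟨insert n J, ?_, ?_⟩
    · intro i hi
      rcases Finset.mem_insert.mp hi with rfl | hi
      · exact hn
      · exact hJ i hi
    · rw [Finset.sum_insert hnJ]
      omega
  · rintro ⟨I, hI, hsum⟩
    obtain ⟨hnI, hk'⟩ := key I hI hsum
    exact ⟨I.erase n, fun i hi => hI i (Finset.mem_of_mem_erase hi), hk'⟩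
end

section
/- Let q ≥ 3 be an integer (in the paper, a prime power), and let n and k be positive integers with k < q^n − 1. Then k can be written as ∑_{j ∈ J} (q^j − 1) for some finite set J of positive integers if and only if k + (q^n − 1) can be written as ∑_{i ∈ I} (q^i − 1) for some finite set I of positive integers. Moreover, for any such I one has n ∈ I, and if k = ∑_{j ∈ J}(q^j − 1) then n ∉ J and I = J ∪ {n} works. -/
lemma geom_aux_shift (q : ℕ) (hq : 3 ≤ q) (n : ℕ) (hn : 1 ≤ n) :
    ∑ i ∈ Finset.range n, (q ^ i - 1) < q ^ n - 1 := by
  induction n with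
  | zero => omega
  | succ m ih =>
    rw [Finset.sum_range_succ]
    rcases Nat.eq_zero_or_pos m with hm | hm
    · subst hm; simp; omega
    · have h1 := ih hm
      have h2 : 1 ≤ q ^ m := Nat.one_le_pow _ _ (by omega)
      have h3 : 3 * q ^ m ≤ q ^ (m + 1) := by
        calc 3 * q ^ m = q ^ m * 3 := by ring
        _ ≤ q ^ m * q := Nat.mul_le_mul_left _ hq
        _ = q ^ (m + 1) := (pow_succ q m).symm
      omega

/-- For `q ≥ 3` and positive integers `n, k` with `k < q^n − 1`: `k` is a sum of
distinct terms `q^j − 1` (with `j ≥ 1`) iff `k + (q^n − 1)` is; moreover any such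
representation of `k + (q^n − 1)` contains `n`, and if `k = ∑_{j ∈ J}(q^j − 1)`
then `n ∉ J` and `I = J ∪ {n}` represents `k + (q^n − 1)`. -/
theorem shift_representation_q (q : ℕ) (hq : 3 ≤ q) (n k : ℕ) (hn : 1 ≤ n) (hk : 1 ≤ k)
    (hlt : k < q ^ n - 1) :
    ((∃ J : Finset ℕ, (∀ j ∈ J, 1 ≤ j) ∧ k = ∑ j ∈ J, (q ^ j - 1)) ↔
      (∃ I : Finset ℕ, (∀ i ∈ I, 1 ≤ i) ∧ k + (q ^ n - 1) = ∑ i ∈ I, (q ^ i - 1))) ∧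
    (∀ I : Finset ℕ, (∀ i ∈ I, 1 ≤ i) → k + (q ^ n - 1) = ∑ i ∈ I, (q ^ i - 1) →
      n ∈ I) ∧
    (∀ J : Finset ℕ, (∀ j ∈ J, 1 ≤ j) → k = ∑ j ∈ J, (q ^ j - 1) →
      n ∉ J ∧ k + (q ^ n - 1) = ∑ i ∈ insert n J, (q ^ i - 1)) := by
  have hqn : 1 ≤ q ^ n := Nat.one_le_pow _ _ (by omega)
  have part3 : ∀ J : Finset ℕ, (∀ j ∈ J, 1 ≤ j) → k = ∑ j ∈ J, (q ^ j - 1) →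
      n ∉ J ∧ k + (q ^ n - 1) = ∑ i ∈ insert n J, (q ^ i - 1) := by
    intro J hJ hsum
    have hnJ : n ∉ J := by
      intro hmem
      have h1 : q ^ n - 1 ≤ ∑ j ∈ J, (q ^ j - 1) :=
        Finset.single_le_sum (f := fun j => q ^ j - 1) (fun i _ => Nat.zero_le _) hmem
      omega
    refine ⟨hnJ, ?_⟩
    rw [Finset.sum_insert hnJ, ← hsum]
    omega
  have part2 : ∀ I : Finset ℕ, (∀ i ∈ I, 1 ≤ i) →
      k + (q ^ n - 1) = ∑ i ∈ I, (q ^ i - 1) → n ∈ I := by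
    intro I hI hsum
    by_contra hnI
    have h3 : 3 * q ^ n ≤ q ^ (n + 1) := by
      calc 3 * q ^ n = q ^ n * 3 := by ring
      _ ≤ q ^ n * q := Nat.mul_le_mul_left _ hq
      _ = q ^ (n + 1) := (pow_succ q n).symm
    by_cases hbig : ∃ i ∈ I, n < i
    · obtain ⟨i, hiI, hni⟩ := hbig
      have h1 : q ^ i - 1 ≤ ∑ i ∈ I, (q ^ i - 1) :=
        Finset.single_le_sum (f := fun j => q ^ j - 1) (fun i _ => Nat.zero_le _) hiI
      have h2 : q ^ (n + 1) ≤ q ^ i := Nat.pow_le_pow_right (by omega) (by omega)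
      omega
    · push_neg at hbig
      have hsub : I ⊆ Finset.range n := by
        intro i hi
        have h1 := hbig i hi
        have h2 : i ≠ n := fun h => hnI (h ▸ hi)
        simp only [Finset.mem_range]
        omega
      have h1 : ∑ i ∈ I, (q ^ i - 1) ≤ ∑ i ∈ Finset.range n, (q ^ i - 1) :=
        Finset.sum_le_sum_of_subset hsub
      have h2 := geom_aux_shift q hq n hn
      omega
  refine ⟨?_, part2, part3⟩
  constructor
  · rintro ⟨J, hJ, hsum⟩
    obtain ⟨hnJ, hins⟩ := part3 J hJ hsum
    refine ⟨insert n J, ?_, hins⟩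
    intro i hi
    rcases Finset.mem_insert.mp hi with h | h
    · omega
    · exact hJ i h
  · rintro ⟨I, hI, hsum⟩
    have hnI := part2 I hI hsum
    refine ⟨I.erase n, fun j hj => hI j (Finset.mem_of_mem_erase hj), ?_⟩
    have h1 : ∑ i ∈ I.erase n, (q ^ i - 1) + (q ^ n - 1) = ∑ i ∈ I, (q ^ i - 1) :=
      Finset.sum_erase_add I _ hnI
    omega
end

section
/- Let q ≥ 3 be an integer (in the paper, a prime power), let n be a positive integer, and let k be an integer with 2(q^n − 1) ≤ k ≤ q^{n+1} − 2. Then there is no finite set J of positive integers such that k = ∑_{j ∈ J} (q^j − 1). (Equivalently, the corresponding coefficient p_k of 1/Π_q vanishes.) -/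
lemma geom_bound (q : ℕ) (hq : 3 ≤ q) : ∀ n, 1 ≤ n →
    2 * (∑ j ∈ Finset.Icc 1 n, q ^ j) + 3 ≤ 3 * q ^ n := by
  intro n hn
  induction n, hn using Nat.le_induction with
  | base => simp [Finset.Icc_self]; omega
  | succ n hn ih =>
    rw [Finset.sum_Icc_succ_top (by omega : 1 ≤ n + 1)]
    have h3 : 3 * q ^ n ≤ q ^ (n + 1) := by
      rw [pow_succ']
      exact Nat.mul_le_mul_right _ hq
    omega

/-- For `q ≥ 3`, `n ≥ 1` and `2(q^n − 1) ≤ k ≤ q^{n+1} − 2`, the integer `k` is not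
a sum of distinct terms `q^j − 1` with `j ≥ 1` (so the corresponding coefficient
of `1/Π_q` vanishes). -/
theorem no_representation_in_gap (q : ℕ) (hq : 3 ≤ q) (n : ℕ) (hn : 1 ≤ n) (k : ℕ)
    (hk₁ : 2 * (q ^ n - 1) ≤ k) (hk₂ : k ≤ q ^ (n + 1) - 2) :
    ¬ ∃ J : Finset ℕ, (∀ j ∈ J, 1 ≤ j) ∧ k = ∑ j ∈ J, (q ^ j - 1) := by
  rintro ⟨J, hJ1, hk⟩
  by_cases hJn : ∀ j ∈ J, j ≤ n
  · have hsub : J ⊆ Finset.Icc 1 n := fun j hj =>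
      Finset.mem_Icc.mpr ⟨hJ1 j hj, hJn j hj⟩
    have h1 : k ≤ ∑ j ∈ Finset.Icc 1 n, (q ^ j - 1) := by
      rw [hk]
      exact Finset.sum_le_sum_of_subset hsub
    have h2 : ∑ j ∈ Finset.Icc 1 n, (q ^ j - 1) ≤ ∑ j ∈ Finset.Icc 1 n, q ^ j :=
      Finset.sum_le_sum fun j _ => Nat.sub_le _ _
    have key := geom_bound q hq n hn
    have hqn : 3 ≤ q ^ n := le_trans hq (Nat.le_self_pow (by omega) q)
    omega
  · push_neg at hJn
    obtain ⟨j, hjJ, hjn⟩ := hJn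
    have hpow : q ^ (n + 1) ≤ q ^ j := Nat.pow_le_pow_right (by omega) (by omega)
    have hk' : q ^ j - 1 ≤ k := by
      rw [hk]
      exact Finset.single_le_sum (f := fun j => q ^ j - 1) (fun _ _ => Nat.zero_le _) hjJ
    have hq2 : 3 ≤ q ^ (n + 1) := le_trans hq (Nat.le_self_pow (by omega) q)
    omega
end

section
/- Every factor of the infinite word 𝔭₂ of length m occurs in its prefix of length 2^{m+1} − 1 (the prefix W₀W₁⋯W_m): for every integer m ≥ 1 and every j : ℕ, there exists i : ℕ with i + m ≤ 2^{m+1} − 1 such that 𝔭₂(i + t) = 𝔭₂(j + t) for all t < m. -/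
open Classical in
/-- The coefficient sequence 𝔭₂ of `1/Π₂`: `𝔭₂ n = 1` iff `n` is a sum of distinct
terms of the form `2^j - 1` with `j ≥ 1` (the empty sum giving `n = 0`). -/
noncomputable def p2 (n : ℕ) : Fin 2 :=
  if ∃ J : Finset ℕ, (∀ j ∈ J, 1 ≤ j) ∧ n = ∑ j ∈ J, (2 ^ j - 1) then 1 else 0

/-- `n` is a sum of distinct terms `2^j - 1` with `j ≥ 1`. -/
def P2Rep (n : ℕ) : Prop :=
  ∃ J : Finset ℕ, (∀ j ∈ J, 1 ≤ j) ∧ n = ∑ j ∈ J, (2 ^ j - 1)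

open Classical in
lemma p2_congr {a b : ℕ} (h : P2Rep a ↔ P2Rep b) : p2 a = p2 b := by
  unfold p2
  exact if_congr h rfl rfl

lemma rep_term_le {n : ℕ} {J : Finset ℕ} (h : n = ∑ j ∈ J, (2 ^ j - 1)) {j : ℕ}
    (hj : j ∈ J) : 2 ^ j - 1 ≤ n := by
  subst h
  exact Finset.single_le_sum (f := fun j => 2 ^ j - 1) (fun _ _ => Nat.zero_le _) hj

lemma sum_Icc_pow (K : ℕ) : (∑ j ∈ Finset.Icc 1 K, (2 ^ j - 1)) + K + 2 = 2 ^ (K + 1) := by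
  induction K with
  | zero => simp
  | succ K ih =>
    rw [Finset.sum_Icc_succ_top (Nat.le_add_left 1 K)]
    have h2 : 1 ≤ 2 ^ (K + 1) := Nat.one_le_two_pow
    have hp : 2 ^ (K + 1 + 1) = 2 ^ (K + 1) * 2 := pow_succ 2 (K + 1)
    omega

lemma sum_subset_bound {J : Finset ℕ} {K : ℕ} (h : J ⊆ Finset.Icc 1 K) :
    (∑ j ∈ J, (2 ^ j - 1)) + K + 2 ≤ 2 ^ (K + 1) := by
  have h1 := Finset.sum_le_sum_of_subset (f := fun j => 2 ^ j - 1) h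
  have h2 := sum_Icc_pow K
  beta_reduce at h1
  omega

/-- Identity (A): shifting by `2^k − 1` preserves representability below `2^k − 1`. -/
lemma repA (k n : ℕ) (hk : 1 ≤ k) (hn : n + 2 ≤ 2 ^ k) :
    P2Rep (n + (2 ^ k - 1)) ↔ P2Rep n := by
  have hpk : 2 ≤ 2 ^ k := by
    calc (2:ℕ) = 2 ^ 1 := rfl
    _ ≤ 2 ^ k := Nat.pow_le_pow_right (by norm_num) hk
  constructor
  · rintro ⟨J, hJ1, hJ2⟩
    have hmem : ∀ j ∈ J, j ≤ k := by
      intro j hj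
      by_contra h
      push_neg at h
      have h1 : 2 ^ j - 1 ≤ n + (2 ^ k - 1) := rep_term_le hJ2 hj
      have h2 : 2 ^ (k + 1) ≤ 2 ^ j := Nat.pow_le_pow_right (by norm_num) h
      have h3 : 2 ^ (k + 1) = 2 ^ k * 2 := pow_succ 2 k
      omega
    have hkJ : k ∈ J := by
      by_contra hknot
      have hsub : J ⊆ Finset.Icc 1 (k - 1) := by
        intro j hj
        have h1 := hJ1 j hj
        have h2 := hmem j hj
        have h3 : j ≠ k := fun e => hknot (e ▸ hj)
        exact Finset.mem_Icc.2 ⟨h1, by omega⟩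
      have hb := sum_subset_bound hsub
      have hkk : k - 1 + 1 = k := by omega
      rw [hkk] at hb
      omega
    refine ⟨J.erase k, fun j hj => hJ1 j (Finset.mem_of_mem_erase hj), ?_⟩
    have hs := Finset.sum_erase_add J (fun j => 2 ^ j - 1) hkJ
    beta_reduce at hs
    omega
  · rintro ⟨J, hJ1, hJ2⟩
    have hknot : k ∉ J := by
      intro hj
      have := rep_term_le hJ2 hj
      omega
    refine ⟨insert k J, ?_, ?_⟩
    · intro j hj
      rcases Finset.mem_insert.1 hj with rfl | hj
      · exact hk
      · exact hJ1 j hj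
    · rw [Finset.sum_insert hknot]
      omega

/-- Identity (B): shifting by `2^t` preserves representability on `[2^t − t, 2^{t+1} − 3]`. -/
lemma repB (t n : ℕ) (ht : 1 ≤ t) (h1 : 2 ^ t - t ≤ n) (h2 : n + 3 ≤ 2 ^ (t + 1)) :
    P2Rep (n + 2 ^ t) ↔ P2Rep n := by
  have hpt : 2 ≤ 2 ^ t := by
    calc (2:ℕ) = 2 ^ 1 := rfl
    _ ≤ 2 ^ t := Nat.pow_le_pow_right (by norm_num) ht
  have htlt : t < 2 ^ t := Nat.lt_two_pow_self (n := t)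
  have hp1 : 2 ^ (t + 1) = 2 ^ t * 2 := pow_succ 2 t
  constructor
  · rintro ⟨J, hJ1, hJ2⟩
    have hmem : ∀ j ∈ J, j ≤ t + 1 := by
      intro j hj
      by_contra h
      push_neg at h
      have ha : 2 ^ j - 1 ≤ n + 2 ^ t := rep_term_le hJ2 hj
      have hb : 2 ^ (t + 2) ≤ 2 ^ j := Nat.pow_le_pow_right (by norm_num) h
      have hc : 2 ^ (t + 2) = 2 ^ t * 4 := by ring
      omega
    have ht1J : t + 1 ∈ J := by
      by_contra hnot
      have hsub : J ⊆ Finset.Icc 1 t := by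
        intro j hj
        have ha := hJ1 j hj
        have hb := hmem j hj
        have hc : j ≠ t + 1 := fun e => hnot (e ▸ hj)
        exact Finset.mem_Icc.2 ⟨ha, by omega⟩
      have hb := sum_subset_bound hsub
      omega
    have htJ : t ∉ J := by
      intro htJ
      have hsub : ({t, t + 1} : Finset ℕ) ⊆ J := by
        intro x hx
        rcases Finset.mem_insert.1 hx with rfl | hx
        · exact htJ
        · rcases Finset.mem_singleton.1 hx with rfl
          exact ht1J
      have hb := Finset.sum_le_sum_of_subset (f := fun j => 2 ^ j - 1) hsub
      rw [Finset.sum_pair (by omega : t ≠ t + 1)] at hb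
      beta_reduce at hb
      omega
    have htJe : t ∉ J.erase (t + 1) := fun h => htJ (Finset.mem_of_mem_erase h)
    refine ⟨insert t (J.erase (t + 1)), ?_, ?_⟩
    · intro j hj
      rcases Finset.mem_insert.1 hj with rfl | hj
      · exact ht
      · exact hJ1 j (Finset.mem_of_mem_erase hj)
    · rw [Finset.sum_insert htJe]
      have hs := Finset.sum_erase_add J (fun j => 2 ^ j - 1) ht1J
      beta_reduce at hs
      omega
  · rintro ⟨J, hJ1, hJ2⟩
    have hmem : ∀ j ∈ J, j ≤ t := by
      intro j hj
      by_contra h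
      push_neg at h
      have ha : 2 ^ j - 1 ≤ n := rep_term_le hJ2 hj
      have hb : 2 ^ (t + 1) ≤ 2 ^ j := Nat.pow_le_pow_right (by norm_num) h
      omega
    have htJ : t ∈ J := by
      by_contra hnot
      have hsub : J ⊆ Finset.Icc 1 (t - 1) := by
        intro j hj
        have ha := hJ1 j hj
        have hb := hmem j hj
        have hc : j ≠ t := fun e => hnot (e ▸ hj)
        exact Finset.mem_Icc.2 ⟨ha, by omega⟩
      have hb := sum_subset_bound hsub
      have hkk : t - 1 + 1 = t := by omega
      rw [hkk] at hb
      omega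
    have ht1J : t + 1 ∉ J.erase t := by
      intro h
      have := hmem _ (Finset.mem_of_mem_erase h)
      omega
    refine ⟨insert (t + 1) (J.erase t), ?_, ?_⟩
    · intro j hj
      rcases Finset.mem_insert.1 hj with rfl | hj
      · omega
      · exact hJ1 j (Finset.mem_of_mem_erase hj)
    · rw [Finset.sum_insert ht1J]
      have hs := Finset.sum_erase_add J (fun j => 2 ^ j - 1) htJ
      beta_reduce at hs
      omega

lemma p2_shiftA (k n : ℕ) (hk : 1 ≤ k) (hn : n + 2 ≤ 2 ^ k) :
    p2 (n + (2 ^ k - 1)) = p2 n := p2_congr (repA k n hk hn)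

lemma p2_shiftB (t n : ℕ) (ht : 1 ≤ t) (h1 : 2 ^ t - t ≤ n) (h2 : n + 3 ≤ 2 ^ (t + 1)) :
    p2 (n + 2 ^ t) = p2 n := p2_congr (repB t n ht h1 h2)

/-- Every factor of length `m` of the infinite word `𝔭₂` occurs in its prefix
`W₀W₁⋯W_m` of length `2^{m+1} − 1`. -/
theorem p2_factors_occur_in_prefix (m : ℕ) (hm : 1 ≤ m) (j : ℕ) :
    ∃ i : ℕ, i + m ≤ 2 ^ (m + 1) - 1 ∧ ∀ t : ℕ, t < m → p2 (i + t) = p2 (j + t) := by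
  induction j using Nat.strong_induction_on with
  | _ j IH =>
    by_cases h0 : j + m ≤ 2 ^ (m + 1) - 1
    · exact ⟨j, h0, fun t _ => rfl⟩
    -- setup
    have hm1 : 2 ^ (m + 1) ≤ j + m := by
      have : 1 ≤ 2 ^ (m + 1) := Nat.one_le_two_pow
      omega
    set k := Nat.log 2 (j + m) with hkdef
    have hjm0 : j + m ≠ 0 := by positivity
    have hklo : 2 ^ k ≤ j + m := Nat.pow_log_le_self 2 hjm0
    have hkhi : j + m < 2 ^ (k + 1) := Nat.lt_pow_succ_log_self (by norm_num) _
    have hkm : m + 1 ≤ k := by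
      by_contra h
      push_neg at h
      have : 2 ^ (k + 1) ≤ 2 ^ (m + 1) := Nat.pow_le_pow_right (by norm_num) (by omega)
      omega
    have hk1 : 1 ≤ k - 1 := by omega
    have hkk : k - 1 + 1 = k := by omega
    have hp1 : 2 ^ k = 2 ^ (k - 1) * 2 := by
      conv_lhs => rw [← hkk]
      exact pow_succ 2 (k - 1)
    have hp2 : 2 ^ (k + 1) = 2 ^ (k - 1) * 4 := by
      conv_lhs => rw [← hkk]
      ring
    have hklt : k - 1 < 2 ^ (k - 1) := Nat.lt_two_pow_self (n := k - 1)
    by_cases hA : 2 ^ k - 1 ≤ j ∧ j + m + 2 ≤ 2 ^ (k + 1)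
    · -- use identity A with shift 2^k - 1
      obtain ⟨hA1, hA2⟩ := hA
      set j' := j - (2 ^ k - 1) with hj'
      have hjj : j = j' + (2 ^ k - 1) := by omega
      have hlt : j' < j := by omega
      obtain ⟨i, hi1, hi2⟩ := IH j' hlt
      refine ⟨i, hi1, fun t ht => ?_⟩
      have heq : p2 (j' + t + (2 ^ k - 1)) = p2 (j' + t) :=
        p2_shiftA k (j' + t) (by omega) (by omega)
      have hpos : j + t = j' + t + (2 ^ k - 1) := by omega
      rw [hpos, heq]
      exact hi2 t ht
    · push_neg at hA
      by_cases hB : 2 ^ k - 1 ≤ j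
      · -- j + m = 2^(k+1) - 1; use identity B with t₀ = k
        have hA2 := hA hB
        set j' := j - 2 ^ k with hj'
        have hjbig : 2 ^ k ≤ j := by omega
        have hjj : j = j' + 2 ^ k := by omega
        have hlt : j' < j := by omega
        obtain ⟨i, hi1, hi2⟩ := IH j' hlt
        refine ⟨i, hi1, fun t ht => ?_⟩
        have heq : p2 (j' + t + 2 ^ k) = p2 (j' + t) :=
          p2_shiftB k (j' + t) (by omega) (by omega) (by omega)
        have hpos : j + t = j' + t + 2 ^ k := by omega
        rw [hpos, heq]
        exact hi2 t ht
      · -- j ≤ 2^k - 2 and j + m ≥ 2^k; use identity B with t₀ = k - 1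
        push_neg at hB
        set j' := j - 2 ^ (k - 1) with hj'
        have hjbig : 2 ^ (k - 1) ≤ j := by omega
        have hjj : j = j' + 2 ^ (k - 1) := by omega
        have hlt : j' < j := by omega
        obtain ⟨i, hi1, hi2⟩ := IH j' hlt
        refine ⟨i, hi1, fun t ht => ?_⟩
        have heq : p2 (j' + t + 2 ^ (k - 1)) = p2 (j' + t) := by
          apply p2_shiftB (k - 1) (j' + t) hk1 (by omega)
          rw [hkk]
          omega
        have hpos : j + t = j' + t + 2 ^ (k - 1) := by omega
        rw [hpos, heq]
        exact hi2 t ht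
end
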